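/- Consider a finite MDP with nonempty finite state set S, nonempty finite action set A, discount γ ∈ [0,1), true transition probabilities p and true reward r with 0 ≤ r(s,a) ≤ r_max for all (s,a), and an approximate model with transition probabilities p̂ and reward r̂ (both p(·|s,a) and p̂(·|s,a) are probability distributions on S for every (s,a)). Let B and B̂ denote the hard Bellman optimality operators induced by (p, r) and (p̂, r̂) respectively, i.e., (BQ)(s,a) = r(s,a) + γ Σ_{s'} p(s'|s,a) max_{a'} Q(s',a') and analogously for B̂. Suppose max_{s,a} Σ_{s'} |p(s'|s,a) − p̂(s'|s,a)| ≤ ε_p and max_{s,a} |r(s,a) − r̂(s,a)| ≤ ε_r. Then for every Q : S × A → ℝ with 0 ≤ Q(s,a) ≤ r_max/(1−γ) for all (s,a), it holds that max_{s,a} |(BQ)(s,a) − (B̂Q)(s,a)| ≤ ε_r + γ · ε_p · r_max / (2(1−γ)). -/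

import Mathlib

/-- The hard Bellman optimality operator induced by a finite MDP model `(p, r, γ)`. -/
noncomputable def hardBellman {S A : Type*} [Fintype S] [Fintype A] [Nonempty A]
    (p : S → A → S → ℝ) (r : S → A → ℝ) (γ : ℝ) (Q : S × A → ℝ) : S × A → ℝ :=
  fun sa =>
    r sa.1 sa.2 +
      γ * ∑ s' : S, p sa.1 sa.2 s' *
        Finset.univ.sup' Finset.univ_nonempty (fun a' : A => Q (s', a'))

/-- Bellman operator error bound: if the approximate model `(p̂, r̂)` has
transition error at most `ε_p` in total-variation (ℓ¹) distance and reward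
error at most `ε_r` in sup norm, then for any `Q` with values in
`[0, r_max / (1 - γ)]`, the induced Bellman operators satisfy
`max_{s,a} |(BQ)(s,a) − (B̂Q)(s,a)| ≤ ε_r + γ ε_p r_max / (2 (1 - γ))`. -/
theorem bellman_operator_error_bound {S A : Type*} [Fintype S] [Fintype A]
    [Nonempty S] [Nonempty A]
    (p phat : S → A → S → ℝ) (r rhat : S → A → ℝ) (γ rmax εp εr : ℝ)
    (hp : ∀ s a s', 0 ≤ p s a s') (hpsum : ∀ s a, ∑ s' : S, p s a s' = 1)
    (hphat : ∀ s a s', 0 ≤ phat s a s') (hphatsum : ∀ s a, ∑ s' : S, phat s a s' = 1)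
    (hr0 : ∀ s a, 0 ≤ r s a) (hrmax : ∀ s a, r s a ≤ rmax)
    (hγ0 : 0 ≤ γ) (hγ1 : γ < 1)
    (hεp : ∀ s a, ∑ s' : S, |p s a s' - phat s a s'| ≤ εp)
    (hεr : ∀ s a, |r s a - rhat s a| ≤ εr)
    (Q : S × A → ℝ) (hQ0 : ∀ sa : S × A, 0 ≤ Q sa)
    (hQub : ∀ sa : S × A, Q sa ≤ rmax / (1 - γ)) :
    Finset.univ.sup' Finset.univ_nonempty
        (fun sa : S × A => |hardBellman p r γ Q sa - hardBellman phat rhat γ Q sa|)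
      ≤ εr + γ * εp * rmax / (2 * (1 - γ)) := by
  obtain ⟨s0⟩ := ‹Nonempty S›
  obtain ⟨a0⟩ := ‹Nonempty A›
  have hrmax0 : 0 ≤ rmax := le_trans (hr0 s0 a0) (hrmax s0 a0)
  have h1γ : 0 < 1 - γ := by linarith
  set c : ℝ := rmax / (2 * (1 - γ)) with hc
  have hc0 : 0 ≤ c := by positivity
  set V : S → ℝ := fun s' =>
    Finset.univ.sup' Finset.univ_nonempty (fun a' : A => Q (s', a')) with hV
  have hV0 : ∀ s', 0 ≤ V s' := fun s' =>
    le_trans (hQ0 (s', a0)) (Finset.le_sup' (fun a' : A => Q (s', a')) (Finset.mem_univ a0))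
  have hVub : ∀ s', V s' ≤ 2 * c := by
    intro s'
    have h2c : rmax / (1 - γ) = 2 * c := by
      rw [hc]; field_simp
    rw [← h2c]
    exact Finset.sup'_le _ _ fun a' _ => hQub (s', a')
  have hVc : ∀ s', |V s' - c| ≤ c := by
    intro s'
    rw [abs_le]
    constructor
    · linarith [hV0 s']
    · linarith [hVub s']
  apply Finset.sup'_le
  rintro ⟨s, a⟩ _
  have key : ∑ s' : S, (p s a s' - phat s a s') * (V s' - c)
      = (∑ s' : S, p s a s' * V s') - ∑ s' : S, phat s a s' * V s' := by
    have h1 : ∑ s' : S, p s a s' * c = c := by rw [← Finset.sum_mul, hpsum, one_mul]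
    have h2 : ∑ s' : S, phat s a s' * c = c := by rw [← Finset.sum_mul, hphatsum, one_mul]
    simp only [sub_mul, mul_sub, Finset.sum_sub_distrib]
    linarith
  have hbound : |∑ s' : S, (p s a s' - phat s a s') * (V s' - c)| ≤ εp * c := by
    calc |∑ s' : S, (p s a s' - phat s a s') * (V s' - c)|
        ≤ ∑ s' : S, |(p s a s' - phat s a s') * (V s' - c)| :=
          Finset.abs_sum_le_sum_abs _ _
      _ ≤ ∑ s' : S, |p s a s' - phat s a s'| * c := by
          refine Finset.sum_le_sum fun s' _ => ?_
          rw [abs_mul]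
          exact mul_le_mul_of_nonneg_left (hVc s') (abs_nonneg _)
      _ = (∑ s' : S, |p s a s' - phat s a s'|) * c := (Finset.sum_mul _ _ _).symm
      _ ≤ εp * c := mul_le_mul_of_nonneg_right (hεp s a) hc0
  have hsplit : hardBellman p r γ Q (s, a) - hardBellman phat rhat γ Q (s, a)
      = (r s a - rhat s a)
        + γ * ((∑ s' : S, p s a s' * V s') - ∑ s' : S, phat s a s' * V s') := by
    simp only [hardBellman, hV]
    ring
  have hfinal : γ * εp * rmax / (2 * (1 - γ)) = γ * (εp * c) := by
    rw [hc]; ring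
  rw [hsplit, hfinal]
  calc |(r s a - rhat s a)
        + γ * ((∑ s' : S, p s a s' * V s') - ∑ s' : S, phat s a s' * V s')|
      ≤ |r s a - rhat s a|
        + |γ * ((∑ s' : S, p s a s' * V s') - ∑ s' : S, phat s a s' * V s')| :=
        abs_add_le _ _
    _ ≤ εr + γ * (εp * c) := by
        refine add_le_add (hεr s a) ?_
        rw [abs_mul, abs_of_nonneg hγ0, ← key]
        exact mul_le_mul_of_nonneg_left hbound hγ0
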